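/- Let G be a finite directed graph and k a nonnegative integer. The collection of (arc sets of) all directed forests in G having exactly k arcs satisfies the weak exchange property: for every pair of distinct directed forests F and F' in G with |A(F)| = |A(F')| = k, there exist e ∈ A(F) \ A(F') and e' ∈ A(F') \ A(F) such that F − e + e' is a directed forest in G. -/

import Mathlib

/-- The vertex set of a set of arcs. -/
def arcVerts {V : Type*} [DecidableEq V] (T : Finset (V × V)) : Finset V :=
  T.image Prod.fst ∪ T.image Prod.snd

/-- The in-degree of a vertex `v` in a set of arcs `T`. -/
def inDeg {V : Type*} [DecidableEq V] (T : Finset (V × V)) (v : V) : ℕ :=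
  (T.filter fun e => e.2 = v).card

/-- The step relation of a set of arcs: `arcRel T a b` iff `(a, b)` is an arc of `T`. -/
def arcRel {V : Type*} (T : Finset (V × V)) : V → V → Prop := fun a b => (a, b) ∈ T

/-- `T` is (the arc set of) a directed tree rooted at `r`: the root has in-degree `0`,
every other vertex has in-degree exactly `1`, and every vertex is reachable from `r`. -/
def IsDirTree {V : Type*} [DecidableEq V] (T : Finset (V × V)) (r : V) : Prop :=
  inDeg T r = 0 ∧ (∀ v ∈ arcVerts T, v ≠ r → inDeg T v = 1) ∧
    ∀ v ∈ arcVerts T, Relation.ReflTransGen (arcRel T) r v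

/-- `F` is (the arc set of) a directed forest: every vertex has in-degree at most `1`
and there is no directed cycle. -/
def IsDirForest {V : Type*} [DecidableEq V] (F : Finset (V × V)) : Prop :=
  (∀ v, inDeg F v ≤ 1) ∧ ∀ e ∈ F, ¬ Relation.ReflTransGen (arcRel F) e.2 e.1

section helpers
variable {V : Type*} [DecidableEq V]

lemma rtg_mono {S T : Finset (V × V)} (h : S ⊆ T) {a b : V}
    (hab : Relation.ReflTransGen (arcRel S) a b) :
    Relation.ReflTransGen (arcRel T) a b :=
  Relation.ReflTransGen.mono (fun _ _ hxy => h hxy) _ _ hab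

lemma head_unique {F : Finset (V × V)} {v : V} (hdeg : inDeg F v ≤ 1) {x y : V}
    (hx : (x, v) ∈ F) (hy : (y, v) ∈ F) : x = y := by
  have h1 : (x, v) ∈ F.filter fun e => e.2 = v := Finset.mem_filter.mpr ⟨hx, rfl⟩
  have h2 : (y, v) ∈ F.filter fun e => e.2 = v := Finset.mem_filter.mpr ⟨hy, rfl⟩
  have := Finset.card_le_one.mp hdeg _ h1 _ h2
  exact congrArg Prod.fst this

lemma insert_path_decomp {S : Finset (V × V)} {a b : V}
    (hba : ¬ Relation.ReflTransGen (arcRel S) b a) {u v : V}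
    (h : Relation.ReflTransGen (arcRel (insert (a, b) S)) u v) :
    Relation.ReflTransGen (arcRel S) u v ∨
      (Relation.ReflTransGen (arcRel S) u a ∧ Relation.ReflTransGen (arcRel S) b v) := by
  induction h with
  | refl => exact Or.inl .refl
  | @tail x w hux hxw ih =>
    rcases Finset.mem_insert.mp hxw with heq | hmem
    · have hx : x = a := congrArg Prod.fst heq
      have hw : w = b := congrArg Prod.snd heq
      subst hx; subst hw
      rcases ih with h1 | ⟨h1, h2⟩
      · exact Or.inr ⟨h1, .refl⟩
      · exact absurd h2 hba
    · rcases ih with h1 | ⟨h1, h2⟩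
      · exact Or.inl (h1.tail hmem)
      · exact Or.inr ⟨h1, h2.tail hmem⟩

lemma acyclic_insert {S : Finset (V × V)} {a b : V}
    (hacS : ∀ e ∈ S, ¬ Relation.ReflTransGen (arcRel S) e.2 e.1)
    (hba : ¬ Relation.ReflTransGen (arcRel S) b a) :
    ∀ e ∈ insert (a, b) S, ¬ Relation.ReflTransGen (arcRel (insert (a, b) S)) e.2 e.1 := by
  intro e he hpath
  rcases Finset.mem_insert.mp he with rfl | hmem
  · rcases insert_path_decomp hba hpath with h1 | ⟨h1, _⟩
    · exact hba h1
    · exact hba h1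
  · rcases insert_path_decomp hba hpath with h1 | ⟨h1, h2⟩
    · exact hacS e hmem h1
    · have harc : arcRel S e.1 e.2 := by
        show (e.1, e.2) ∈ S; simpa using hmem
      exact hba ((h2.tail harc).trans h1)

lemma forest_insert {S : Finset (V × V)} {a b : V}
    (h1 : ∀ v, inDeg S v ≤ 1)
    (h2 : ∀ e ∈ S, ¬ Relation.ReflTransGen (arcRel S) e.2 e.1)
    (hdeg : inDeg S b = 0)
    (hba : ¬ Relation.ReflTransGen (arcRel S) b a) :
    IsDirForest (insert (a, b) S) := by
  constructor
  · intro v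
    by_cases hv : v = b
    · rw [hv]
      have : inDeg (insert (a, b) S) b ≤ inDeg S b + 1 := by
        unfold inDeg
        rw [Finset.filter_insert, if_pos rfl]
        exact Finset.card_insert_le _ _
      omega
    · have : inDeg (insert (a, b) S) v = inDeg S v := by
        unfold inDeg
        rw [Finset.filter_insert, if_neg (by simpa using Ne.symm hv)]
      rw [this]; exact h1 v
  · exact acyclic_insert h2 hba

lemma inDeg_mono {S T : Finset (V × V)} (h : S ⊆ T) (v : V) : inDeg S v ≤ inDeg T v :=
  Finset.card_le_card (Finset.filter_subset_filter _ h)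

lemma forest_subset {S T : Finset (V × V)} (h : S ⊆ T) (hT : IsDirForest T) :
    IsDirForest S := by
  refine ⟨fun v => le_trans (inDeg_mono h v) (hT.1 v), fun e he hp => ?_⟩
  exact hT.2 e (h he) (rtg_mono h hp)

-- Lemma L: cut an arc of F \ F' destroying the unique b⇝a path
lemma exists_cut {F F' : Finset (V × V)} (hdeg : ∀ v, inDeg F v ≤ 1) {a b : V}
    (h : Relation.ReflTransGen (arcRel F) b a) :
    ¬ Relation.ReflTransGen (arcRel (F ∩ F')) b a →
      ∃ e ∈ F \ F', ¬ Relation.ReflTransGen (arcRel (F.erase e)) b a := by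
  induction h with
  | refl => intro hn; exact absurd .refl hn
  | @tail x a hbx hxa ih =>
    intro hn
    have hba : b ≠ a := by rintro rfl; exact hn .refl
    by_cases hx' : (x, a) ∈ F'
    · have hxy : (x, a) ∈ F ∩ F' := Finset.mem_inter.mpr ⟨hxa, hx'⟩
      have hn' : ¬ Relation.ReflTransGen (arcRel (F ∩ F')) b x := fun h => hn (h.tail hxy)
      obtain ⟨e, he, hne⟩ := ih hn'
      refine ⟨e, he, fun hpath => hne ?_⟩
      rcases hpath.cases_tail with heq | ⟨w, hbw, hwa⟩
      · exact absurd heq.symm hba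
      · have hwF : (w, a) ∈ F := Finset.mem_of_mem_erase hwa
        have hwx : w = x := head_unique (hdeg a) hwF hxa
        exact hwx ▸ hbw
    · refine ⟨(x, a), Finset.mem_sdiff.mpr ⟨hxa, hx'⟩, fun hpath => ?_⟩
      rcases hpath.cases_tail with heq | ⟨w, hbw, hwa⟩
      · exact hba heq.symm
      · have hwF : (w, a) ∈ F := Finset.mem_of_mem_erase hwa
        have hwx : w = x := head_unique (hdeg a) hwF hxa
        subst hwx
        exact (Finset.mem_erase.mp hwa).1 rfl

-- Lemma L2: any F-path b⇝a either stays in F ∩ F' or meets an arc of F \ F'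
lemma path_decomp2 {F F' : Finset (V × V)} {a b : V}
    (h : Relation.ReflTransGen (arcRel F) b a) :
    Relation.ReflTransGen (arcRel (F ∩ F')) b a ∨
      ∃ x y, (x, y) ∈ F \ F' ∧ Relation.ReflTransGen (arcRel F) b x := by
  induction h with
  | refl => exact Or.inl .refl
  | @tail x a hbx hxa ih =>
    rcases ih with h1 | h2
    · by_cases hx' : (x, a) ∈ F'
      · exact Or.inl (h1.tail (Finset.mem_inter.mpr ⟨hxa, hx'⟩))
      · exact Or.inr ⟨x, a, Finset.mem_sdiff.mpr ⟨hxa, hx'⟩, hbx⟩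
    · exact Or.inr h2

end helpers

/-- The collection of directed forests with exactly `k` arcs in a finite digraph
satisfies the weak exchange property. -/
theorem stmt3 {V : Type*} [Fintype V] [DecidableEq V] (A : Finset (V × V)) (k : ℕ)
    (F F' : Finset (V × V)) (hFA : F ⊆ A) (hF'A : F' ⊆ A)
    (hF : IsDirForest F) (hF' : IsDirForest F')
    (hkF : F.card = k) (hkF' : F'.card = k) (hne : F ≠ F') :
    ∃ e ∈ F \ F', ∃ e' ∈ F' \ F,
      insert e' (F.erase e) ⊆ A ∧ IsDirForest (insert e' (F.erase e)) := by
  classical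
  have hFd : (F \ F').Nonempty := by
    rw [Finset.sdiff_nonempty]
    intro hsub
    exact hne (Finset.eq_of_subset_of_card_le hsub (by omega))
  have hF'd : (F' \ F).Nonempty := by
    rw [Finset.sdiff_nonempty]
    intro hsub
    exact hne (Finset.eq_of_subset_of_card_le hsub (by omega)).symm
  suffices h : ∃ e ∈ F \ F', ∃ a b : V, (a, b) ∈ F' \ F ∧ inDeg (F.erase e) b = 0 ∧
      ¬ Relation.ReflTransGen (arcRel (F.erase e)) b a by
    obtain ⟨e, he, a, b, he', hdeg0, hba⟩ := h
    refine ⟨e, he, (a, b), he', ?_, ?_⟩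
    · intro x hx
      rcases Finset.mem_insert.mp hx with rfl | hx
      · exact hF'A (Finset.mem_sdiff.mp he').1
      · exact hFA (Finset.mem_of_mem_erase hx)
    · have hforest := forest_subset (Finset.erase_subset e F) hF
      exact forest_insert hforest.1 hforest.2 hdeg0 hba
  by_cases hc : ∃ e' ∈ F' \ F, inDeg F e'.2 = 0
  · obtain ⟨⟨a, b⟩, he', hb0⟩ := hc
    have hb0' : inDeg F b = 0 := hb0
    by_cases hpath : Relation.ReflTransGen (arcRel F) b a
    · have hnot : ¬ Relation.ReflTransGen (arcRel (F ∩ F')) b a := by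
        intro h
        exact hF'.2 (a, b) (Finset.mem_sdiff.mp he').1
          (rtg_mono Finset.inter_subset_right h)
      obtain ⟨e, he, hne'⟩ := exists_cut hF.1 hpath hnot
      refine ⟨e, he, a, b, he', ?_, hne'⟩
      have := inDeg_mono (Finset.erase_subset e F) b
      omega
    · obtain ⟨e, he⟩ := hFd
      refine ⟨e, he, a, b, he', ?_, fun h => hpath (rtg_mono (Finset.erase_subset e F) h)⟩
      have := inDeg_mono (Finset.erase_subset e F) b
      omega
  · push_neg at hc
    have hc' : ∀ e' ∈ F' \ F, inDeg F e'.2 = 1 := fun e' h =>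
      le_antisymm (hF.1 _) (Nat.one_le_iff_ne_zero.mpr (hc e' h))
    -- key claim: some arc (a,b) ∈ F' \ F has no F-path from b to a
    have hkey : ∃ a b : V, (a, b) ∈ F' \ F ∧ ¬ Relation.ReflTransGen (arcRel F) b a := by
      by_contra hno
      push_neg at hno
      have hirr : ∀ v, ¬ Relation.TransGen (arcRel F) v v := by
        intro v hv
        obtain ⟨w, hvw, hwv⟩ := Relation.TransGen.tail'_iff.mp hv
        exact hF.2 (w, v) hwv hvw
      set m : V → ℕ := fun v =>
        (Finset.univ.filter fun u => Relation.ReflTransGen (arcRel F) v u).card with hm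
      have hmono : ∀ v y, Relation.TransGen (arcRel F) v y → m y < m v := by
        intro v y hvy
        apply Finset.card_lt_card
        constructor
        · intro u hu
          simp only [Finset.mem_filter, Finset.mem_univ, true_and] at hu ⊢
          exact hvy.to_reflTransGen.trans hu
        · intro hsub
          have hv : v ∈ Finset.univ.filter fun u => Relation.ReflTransGen (arcRel F) v u :=
            Finset.mem_filter.mpr ⟨Finset.mem_univ v, .refl⟩
          have h2 := hsub hv
          simp only [Finset.mem_filter, Finset.mem_univ, true_and] at h2
          exact hirr v (Relation.TransGen.trans_left hvy h2)
      -- heads of F' = heads of F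
      have hinj : ∀ (G : Finset (V × V)), (∀ v, inDeg G v ≤ 1) →
          (G.image Prod.snd).card = G.card := by
        intro G hG
        apply Finset.card_image_of_injOn
        intro p hp q hq hpq
        have h1 : (p.1, q.2) ∈ G := by rw [← hpq]; simpa using hp
        have h2 : (q.1, q.2) ∈ G := by simpa using hq
        have := head_unique (hG q.2) h1 h2
        exact Prod.ext this hpq
      have hsubheads : F'.image Prod.snd ⊆ F.image Prod.snd := by
        intro v hv
        obtain ⟨p, hp, rfl⟩ := Finset.mem_image.mp hv
        by_cases hpF : p ∈ F
        · exact Finset.mem_image_of_mem _ hpF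
        · have h1 := hc' p (Finset.mem_sdiff.mpr ⟨hp, hpF⟩)
          have h2 : (F.filter fun e => e.2 = p.2).Nonempty := by
            rw [← Finset.card_pos]
            unfold inDeg at h1
            omega
          obtain ⟨q, hq⟩ := h2
          have := Finset.mem_filter.mp hq
          exact Finset.mem_image.mpr ⟨q, this.1, this.2⟩
      have hheads : F'.image Prod.snd = F.image Prod.snd :=
        Finset.eq_of_subset_of_card_le hsubheads
          (by rw [hinj F hF.1, hinj F' hF'.1, hkF, hkF'])
      -- pick minimal head b of F' \ F
      obtain ⟨b, hbB, hbmin⟩ :=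
        Finset.exists_min_image ((F' \ F).image Prod.snd) m (hF'd.image _)
      obtain ⟨e0, he0, he02⟩ := Finset.mem_image.mp hbB
      have hab : (e0.1, b) ∈ F' \ F := by rw [← he02]; simpa using he0
      have hpath0 : Relation.ReflTransGen (arcRel F) b e0.1 := hno e0.1 b hab
      have hnot : ¬ Relation.ReflTransGen (arcRel (F ∩ F')) b e0.1 := by
        intro h
        exact hF'.2 (e0.1, b) (Finset.mem_sdiff.mp hab).1
          (rtg_mono Finset.inter_subset_right h)
      rcases path_decomp2 hpath0 with h1 | ⟨x, y, hxy, hbx⟩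
      · exact hnot h1
      · have hxyF : (x, y) ∈ F := (Finset.mem_sdiff.mp hxy).1
        have hxyF' : (x, y) ∉ F' := (Finset.mem_sdiff.mp hxy).2
        have hty : Relation.TransGen (arcRel F) b y := Relation.TransGen.tail' hbx hxyF
        -- y is a head of F, hence of F', via an arc of F' \ F
        have hyF : y ∈ F.image Prod.snd := Finset.mem_image.mpr ⟨(x, y), hxyF, rfl⟩
        rw [← hheads] at hyF
        obtain ⟨w, hw, hw2⟩ := Finset.mem_image.mp hyF
        have hwF' : (w.1, y) ∈ F' := by rw [← hw2]; simpa using hw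
        have hwF : (w.1, y) ∉ F := by
          intro hwF
          have := head_unique (hF.1 y) hwF hxyF
          rw [this] at hwF'
          exact hxyF' hwF'
        have hyB : y ∈ (F' \ F).image Prod.snd :=
          Finset.mem_image.mpr ⟨(w.1, y), Finset.mem_sdiff.mpr ⟨hwF', hwF⟩, rfl⟩
        have := hbmin y hyB
        have := hmono b y hty
        omega
    obtain ⟨a, b, hab, hnopath⟩ := hkey
    have hdeg1 : inDeg F b = 1 := hc' (a, b) hab
    have h2 : (F.filter fun e => e.2 = b).Nonempty := by
      rw [← Finset.card_pos]
      unfold inDeg at hdeg1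
      omega
    obtain ⟨p, hp⟩ := h2
    obtain ⟨hpF, hp2⟩ := Finset.mem_filter.mp hp
    have hpFpair : (p.1, b) ∈ F := by rw [← hp2]; simpa using hpF
    have hpF' : (p.1, b) ∉ F' := by
      intro hpF'
      have := head_unique (hF'.1 b) hpF' (Finset.mem_sdiff.mp hab).1
      rw [this] at hpFpair
      exact (Finset.mem_sdiff.mp hab).2 hpFpair
    refine ⟨(p.1, b), Finset.mem_sdiff.mpr ⟨hpFpair, hpF'⟩, a, b, hab, ?_, ?_⟩
    · unfold inDeg
      rw [Finset.card_eq_zero, Finset.filter_eq_empty_iff]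
      rintro ⟨q1, q2⟩ hq hq2
      simp only at hq2
      have hqF : (q1, b) ∈ F := by rw [← hq2]; exact Finset.mem_of_mem_erase hq
      have hq1 : q1 = p.1 := head_unique (hF.1 b) hqF hpFpair
      have heqp : (q1, q2) = (p.1, b) := by rw [hq1, hq2]
      exact (Finset.mem_erase.mp hq).1 heqp
    · exact fun h => hnopath (rtg_mono (Finset.erase_subset _ F) h)
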